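/- With |ψ⁽⁶⁾(a,b)⟩ as defined (family 6 of 4-qubit states), let T₁ = I₂ ⊗ I₂ ⊗ (iσ_y) ⊗ (iσ_y) and let P₁₂ swap the first two tensor factors. Then P₁₂ T₁ |ψ⁽⁶⁾(a,b)⟩ = |ψ⁽⁶⁾(a,−b)⟩ for all a, b ∈ ℂ. -/
import Mathlib


noncomputable section

open Complex

/-- The 4-qubit state space `(ℂ²)^⊗4`, realized as functions on the computational basis. -/
abbrev Q4 := Fin 2 × Fin 2 × Fin 2 × Fin 2 → ℂ

/-- The computational basis state `|ijkl⟩`. -/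
def ket (i j k l : Fin 2) : Q4 := Pi.single (i, j, k, l) 1

/-- The factor-wise action `A ⊗ B ⊗ C ⊗ D` of four one-qubit operators on `(ℂ²)^⊗4`. -/
def tens4 (A B C D : Matrix (Fin 2) (Fin 2) ℂ) (ψ : Q4) : Q4 := fun x =>
  ∑ y : Fin 2 × Fin 2 × Fin 2 × Fin 2,
    A x.1 y.1 * B x.2.1 y.2.1 * C x.2.2.1 y.2.2.1 * D x.2.2.2 y.2.2.2 * ψ y

/-- The Pauli matrix `σ_y`. -/
def σy : Matrix (Fin 2) (Fin 2) ℂ := !![0, -I; I, 0]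

/-- The swap of the first two tensor factors: `|ijkl⟩ ↦ |jikl⟩`. -/
def P12 (ψ : Q4) : Q4 := fun x => ψ (x.2.1, x.1, x.2.2.1, x.2.2.2)

/-- The family-6 state `|ψ⁽⁶⁾(a,b)⟩`. -/
def ψ6 (a b : ℂ) : Q4 :=
  ((a + b) / 2) • (ket 0 0 0 0 + ket 1 1 1 1)
  + b • (ket 0 1 0 1 + ket 1 0 1 0)
  + I • (ket 1 0 0 1 - ket 0 1 1 0)
  + ((a - b) / 2) • (ket 0 0 1 1 + ket 1 1 0 0)
  + (1 / 2 : ℂ) • (ket 0 0 1 0 + ket 0 1 0 0 + ket 1 0 1 1 + ket 1 1 0 1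
      - ket 0 0 0 1 - ket 0 1 1 1 - ket 1 0 0 0 - ket 1 1 1 0)

@[simp] lemma psi6_v0000 (a b : ℂ) : ψ6 a b (0,0,0,0) = (a+b)/2 := by simp [ψ6, ket, Pi.single_apply]; try ring
@[simp] lemma psi6_v1111 (a b : ℂ) : ψ6 a b (1,1,1,1) = (a+b)/2 := by simp [ψ6, ket, Pi.single_apply]; try ring
@[simp] lemma psi6_v0101 (a b : ℂ) : ψ6 a b (0,1,0,1) = b := by simp [ψ6, ket, Pi.single_apply]; try ring
@[simp] lemma psi6_v1010 (a b : ℂ) : ψ6 a b (1,0,1,0) = b := by simp [ψ6, ket, Pi.single_apply]; try ring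
@[simp] lemma psi6_v1001 (a b : ℂ) : ψ6 a b (1,0,0,1) = I := by simp [ψ6, ket, Pi.single_apply]; try ring
@[simp] lemma psi6_v0110 (a b : ℂ) : ψ6 a b (0,1,1,0) = -I := by simp [ψ6, ket, Pi.single_apply]; try ring
@[simp] lemma psi6_v0011 (a b : ℂ) : ψ6 a b (0,0,1,1) = (a-b)/2 := by simp [ψ6, ket, Pi.single_apply]; try ring
@[simp] lemma psi6_v1100 (a b : ℂ) : ψ6 a b (1,1,0,0) = (a-b)/2 := by simp [ψ6, ket, Pi.single_apply]; try ring
@[simp] lemma psi6_v0010 (a b : ℂ) : ψ6 a b (0,0,1,0) = 1/2 := by simp [ψ6, ket, Pi.single_apply]; try ring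
@[simp] lemma psi6_v0100 (a b : ℂ) : ψ6 a b (0,1,0,0) = 1/2 := by simp [ψ6, ket, Pi.single_apply]; try ring
@[simp] lemma psi6_v1011 (a b : ℂ) : ψ6 a b (1,0,1,1) = 1/2 := by simp [ψ6, ket, Pi.single_apply]; try ring
@[simp] lemma psi6_v1101 (a b : ℂ) : ψ6 a b (1,1,0,1) = 1/2 := by simp [ψ6, ket, Pi.single_apply]; try ring
@[simp] lemma psi6_v0001 (a b : ℂ) : ψ6 a b (0,0,0,1) = -(1/2) := by simp [ψ6, ket, Pi.single_apply]; try ring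
@[simp] lemma psi6_v0111 (a b : ℂ) : ψ6 a b (0,1,1,1) = -(1/2) := by simp [ψ6, ket, Pi.single_apply]; try ring
@[simp] lemma psi6_v1000 (a b : ℂ) : ψ6 a b (1,0,0,0) = -(1/2) := by simp [ψ6, ket, Pi.single_apply]; try ring
@[simp] lemma psi6_v1110 (a b : ℂ) : ψ6 a b (1,1,1,0) = -(1/2) := by simp [ψ6, ket, Pi.single_apply]; try ring

/-- applying `T₁ = I₂ ⊗ I₂ ⊗ (iσ_y) ⊗ (iσ_y)` followed by the swap of
the first two qubits maps `|ψ⁽⁶⁾(a,b)⟩` to `|ψ⁽⁶⁾(a,−b)⟩`. -/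
theorem stmt_12 (a b : ℂ) :
    P12 (tens4 1 1 (I • σy) (I • σy) (ψ6 a b)) = ψ6 a (-b) := by
  funext x
  obtain ⟨i, j, k, l⟩ := x
  fin_cases i <;> fin_cases j <;> fin_cases k <;> fin_cases l <;>
    simp only [P12, tens4, Fintype.sum_prod_type, Fin.sum_univ_two] <;>
    (try norm_num [Matrix.one_apply, σy]) <;>
    (try simp [← Prod.mk_zero_zero, ← Prod.mk_one_one]) <;>
    (try ring_nf)
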